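/- Let q be a plurisubharmonic real quadratic form on ℂ^n ≅ ℝ^(2n), with decomposition q = h + ℓ where h(x) = (q(x) − q(ix))/2 is pluriharmonic and ℓ(x) = (q(x) + q(ix))/2 is the Levi part (ℓ ≥ 0). Then m₊(q) ≥ m₋(q), where (m₊, m₋) is the signature of q as a real quadratic form. -/
import Mathlib


open scoped BigOperators

/-- For a plurisubharmonic real quadratic form `q` on `ℂⁿ ≅ ℝ^(2n)` (i.e. the Levi part
`ℓ(x) = (q(x) + q(ix))/2` is ≥ 0), one has `m₊(q) ≥ m₋(q)`: for every real subspace on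
which `q` is negative definite there is a real subspace of at least the same dimension
on which `q` is positive definite. -/
theorem stmt14 {n : ℕ} (q : QuadraticMap ℝ (Fin n → ℂ) ℝ)
    (hpsh : ∀ x : Fin n → ℂ, 0 ≤ (q x + q (Complex.I • x)) / 2) :
    ∀ L : Submodule ℝ (Fin n → ℂ), (∀ x ∈ L, x ≠ 0 → q x < 0) →
      ∃ W : Submodule ℝ (Fin n → ℂ),
        Module.finrank ℝ L ≤ Module.finrank ℝ W ∧ ∀ x ∈ W, x ≠ 0 → 0 < q x := by
  intro L hL
  let f : (Fin n → ℂ) →ₗ[ℝ] (Fin n → ℂ) :=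
    (LinearMap.lsmul ℂ (Fin n → ℂ) Complex.I).restrictScalars ℝ
  have hf : Function.Injective f := by
    intro a b hab
    have : Complex.I • a = Complex.I • b := hab
    have := congrArg (fun z => Complex.I⁻¹ • z) this
    simpa [smul_smul, Complex.I_ne_zero] using this
  refine ⟨L.map f, ?_, ?_⟩
  · exact le_of_eq (Submodule.equivMapOfInjective f hf L).finrank_eq
  · rintro x hx hx0
    rcases Submodule.mem_map.mp hx with ⟨y, hy, rfl⟩
    have hy0 : y ≠ 0 := by
      rintro rfl; exact hx0 (map_zero f)
    have h1 : q y < 0 := hL y hy hy0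
    have h2 : 0 ≤ (q y + q (Complex.I • y)) / 2 := hpsh y
    have : f y = Complex.I • y := rfl
    rw [this]
    linarith
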